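/- In the cyclic ladder gadget of the previous context, let F be any set of diagonal non-edges such that G^x + F is C4-free, let A = { i : t_i b_{i+1} ∈ F } and B = { i : t_{i+1} b_i ∈ F } (indices mod 4p). Then A ∪ B = Z/4pZ, and for every i, i ∈ A implies i+1 ∉ B. -/

import Mathlib

/-- The cycle on 4 vertices. -/
def C4 : SimpleGraph (Fin 4) :=
  SimpleGraph.fromEdgeSet {s(0,1), s(1,2), s(2,3), s(3,0)}

/-- The cyclic ladder variable gadget on `16 p` vertices. Vertices are pairs
`(j, i)` with `i : ZMod (4 p)`, where `(0, i) = tᵢ`, `(1, i) = bᵢ`,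
`(2, i) = uᵢ`, `(3, i) = dᵢ`. Edges: the cycles `tᵢ tᵢ₊₁` and `bᵢ bᵢ₊₁`, the
rungs `tᵢ bᵢ`, `uᵢ` adjacent to `tᵢ₋₁, tᵢ, tᵢ₊₁`, and `dᵢ` adjacent to
`bᵢ₋₁, bᵢ, bᵢ₊₁`. -/
def ladder (p : ℕ) : SimpleGraph (Fin 4 × ZMod (4 * p)) :=
  SimpleGraph.fromRel (fun x y =>
    (x.1 = 0 ∧ y.1 = 0 ∧ y.2 = x.2 + 1) ∨
    (x.1 = 1 ∧ y.1 = 1 ∧ y.2 = x.2 + 1) ∨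
    (x.1 = 0 ∧ y.1 = 1 ∧ y.2 = x.2) ∨
    (x.1 = 2 ∧ y.1 = 0 ∧ (y.2 = x.2 - 1 ∨ y.2 = x.2 ∨ y.2 = x.2 + 1)) ∨
    (x.1 = 3 ∧ y.1 = 1 ∧ (y.2 = x.2 - 1 ∨ y.2 = x.2 ∨ y.2 = x.2 + 1)))

/-- The diagonals `tᵢ bᵢ₊₁`. -/
def diagT (p : ℕ) : Set (Sym2 (Fin 4 × ZMod (4 * p))) :=
  {e | ∃ i : ZMod (4 * p), e = s(((0 : Fin 4), i), ((1 : Fin 4), i + 1))}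

/-- The diagonals `tᵢ₊₁ bᵢ`. -/
def diagB (p : ℕ) : Set (Sym2 (Fin 4 × ZMod (4 * p))) :=
  {e | ∃ i : ZMod (4 * p), e = s(((0 : Fin 4), i + 1), ((1 : Fin 4), i))}

def emb_of_square {V : Type*} (G : SimpleGraph V) (v0 v1 v2 v3 : V)
    (d01 : v0 ≠ v1) (d02 : v0 ≠ v2) (d03 : v0 ≠ v3)
    (d12 : v1 ≠ v2) (d13 : v1 ≠ v3) (d23 : v2 ≠ v3)
    (h01 : G.Adj v0 v1) (h12 : G.Adj v1 v2)
    (h23 : G.Adj v2 v3) (h30 : G.Adj v3 v0)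
    (h02 : ¬ G.Adj v0 v2) (h13 : ¬ G.Adj v1 v3) :
    C4 ↪g G := by
  have d01' := d01.symm; have d02' := d02.symm; have d03' := d03.symm
  have d12' := d12.symm; have d13' := d13.symm; have d23' := d23.symm
  refine ⟨⟨![v0,v1,v2,v3], ?_⟩, ?_⟩
  · intro a b
    fin_cases a <;> fin_cases b <;> simp_all
  · intro a b
    change G.Adj (![v0,v1,v2,v3] a) (![v0,v1,v2,v3] b) ↔ C4.Adj a b
    fin_cases a <;> fin_cases b <;>
      simp_all [C4, SimpleGraph.fromEdgeSet_adj, Sym2.eq, Sym2.rel_iff',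
        Prod.ext_iff, G.adj_comm, Set.mem_insert_iff]

/-- For any set `F` of diagonal non-edges of the cyclic ladder gadget such that
the ladder plus `F` is `C4`-free, letting `A = {i | tᵢ bᵢ₊₁ ∈ F}` and
`B = {i | tᵢ₊₁ bᵢ ∈ F}`, we have `A ∪ B = ZMod (4 p)` and `i ∈ A` implies
`i + 1 ∉ B`. -/
theorem ladder_solution_structure (p : ℕ) (hp : 2 ≤ p)
    (F : Set (Sym2 (Fin 4 × ZMod (4 * p)))) (hF : F ⊆ diagT p ∪ diagB p)
    (hfree : IsEmpty (C4 ↪g (ladder p ⊔ SimpleGraph.fromEdgeSet F))) :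
    ({i : ZMod (4 * p) | s(((0 : Fin 4), i), ((1 : Fin 4), i + 1)) ∈ F} ∪
        {i : ZMod (4 * p) | s(((0 : Fin 4), i + 1), ((1 : Fin 4), i)) ∈ F} = Set.univ) ∧
      ∀ i : ZMod (4 * p), s(((0 : Fin 4), i), ((1 : Fin 4), i + 1)) ∈ F →
        s(((0 : Fin 4), (i + 1) + 1), ((1 : Fin 4), i + 1)) ∉ F := by
  haveI : NeZero (4 * p) := ⟨by omega⟩
  set G := ladder p ⊔ SimpleGraph.fromEdgeSet F with hG
  have hk : ∀ k : ℕ, 0 < k → k < 4 * p → (k : ZMod (4 * p)) ≠ 0 := by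
    intro k hk1 hk2 h
    rw [ZMod.natCast_eq_zero_iff] at h
    have := Nat.le_of_dvd hk1 h
    omega
  have h1 : (1 : ZMod (4 * p)) ≠ 0 := by simpa using hk 1 (by omega) (by omega)
  have h2 : (2 : ZMod (4 * p)) ≠ 0 := by simpa using hk 2 (by omega) (by omega)
  have h3 : (3 : ZMod (4 * p)) ≠ 0 := by simpa using hk 3 (by omega) (by omega)
  have hne : ∀ (i : ZMod (4 * p)) (k : ZMod (4 * p)), k ≠ 0 → i + k ≠ i := by
    intro i k hk0 h
    exact hk0 (by simpa using congrArg (· - i) h)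
  -- non-membership in F
  have nF_tt : ∀ i j : ZMod (4 * p), s(((0 : Fin 4), i), ((0 : Fin 4), j)) ∉ F := by
    intro i j h
    rcases hF h with h' | h' <;> obtain ⟨k, hk⟩ := h' <;>
      simp [Sym2.eq, Sym2.rel_iff', Prod.ext_iff] at hk
  have nF_ub : ∀ i j : ZMod (4 * p), s(((2 : Fin 4), i), ((1 : Fin 4), j)) ∉ F := by
    intro i j h
    rcases hF h with h' | h' <;> obtain ⟨k, hk⟩ := h' <;>
      simp [Sym2.eq, Sym2.rel_iff', Prod.ext_iff] at hk
  -- part 1 embedding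
  have emb1 : ∀ i : ZMod (4 * p),
      s(((0 : Fin 4), i), ((1 : Fin 4), i + 1)) ∉ F →
      s(((0 : Fin 4), i + 1), ((1 : Fin 4), i)) ∉ F → C4 ↪g G := by
    intro i hA hB
    have ne1 : i + 1 ≠ i := hne i 1 h1
    refine emb_of_square G ((0 : Fin 4), i) ((0 : Fin 4), i + 1)
      ((1 : Fin 4), i + 1) ((1 : Fin 4), i) ?_ ?_ ?_ ?_ ?_ ?_ ?_ ?_ ?_ ?_ ?_ ?_
    · simp [Prod.ext_iff, h1, h1.symm, ne1, ne1.symm]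
    · simp [Prod.ext_iff]
    · simp [Prod.ext_iff]
    · simp [Prod.ext_iff]
    · simp [Prod.ext_iff]
    · simp [Prod.ext_iff, h1, h1.symm, ne1, ne1.symm]
    · exact Or.inl (by
        simp only [ladder, SimpleGraph.fromRel_adj]
        exact ⟨by simp [Prod.ext_iff, h1, h1.symm, ne1, ne1.symm], Or.inl (by simp)⟩)
    · exact Or.inl (by
        simp only [ladder, SimpleGraph.fromRel_adj]
        exact ⟨by simp [Prod.ext_iff], Or.inl (by simp)⟩)
    · exact Or.inl (by
        simp only [ladder, SimpleGraph.fromRel_adj]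
        exact ⟨by simp [Prod.ext_iff, h1, h1.symm, ne1, ne1.symm], Or.inr (by simp)⟩)
    · exact Or.inl (by
        simp only [ladder, SimpleGraph.fromRel_adj]
        exact ⟨by simp [Prod.ext_iff], Or.inr (by simp)⟩)
    · rw [hG]
      simp only [SimpleGraph.sup_adj, SimpleGraph.fromEdgeSet_adj, not_or, not_and]
      refine ⟨?_, fun h => absurd h hA⟩
      simp only [ladder, SimpleGraph.fromRel_adj, not_and, not_or]
      intro _
      simp [Prod.ext_iff, h1, h1.symm, ne1, ne1.symm]
    · rw [hG]
      simp only [SimpleGraph.sup_adj, SimpleGraph.fromEdgeSet_adj, not_or, not_and]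
      refine ⟨?_, fun h => absurd h hB⟩
      simp only [ladder, SimpleGraph.fromRel_adj, not_and, not_or]
      intro _
      simp [Prod.ext_iff, h1, h1.symm, ne1, ne1.symm]
  have emb2 : ∀ i : ZMod (4 * p),
      s(((0 : Fin 4), i), ((1 : Fin 4), i + 1)) ∈ F →
      s(((0 : Fin 4), (i + 1) + 1), ((1 : Fin 4), i + 1)) ∈ F → C4 ↪g G := by
    intro i hA hB
    have ne1 : i + 1 ≠ i := hne i 1 h1
    have ne1' : i + 1 + 1 ≠ i + 1 := hne (i + 1) 1 h1
    have ne2 : i + 1 + 1 ≠ i := by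
      have := hne i 2 h2
      rwa [show (2 : ZMod (4 * p)) = 1 + 1 by norm_num, ← add_assoc] at this
    have ne3 : i + 1 + 1 + 1 ≠ i := by
      have := hne i 3 h3
      rwa [show (3 : ZMod (4 * p)) = 1 + 1 + 1 by norm_num, ← add_assoc, ← add_assoc] at this
    refine emb_of_square G ((0 : Fin 4), i) ((2 : Fin 4), i + 1)
      ((0 : Fin 4), i + 1 + 1) ((1 : Fin 4), i + 1) ?_ ?_ ?_ ?_ ?_ ?_ ?_ ?_ ?_ ?_ ?_ ?_
    · simp [Prod.ext_iff]
    · simp [Prod.ext_iff, ne2, ne2.symm]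
    · simp [Prod.ext_iff]
    · simp [Prod.ext_iff]
    · simp [Prod.ext_iff]
    · simp [Prod.ext_iff]
    · exact Or.inl (by
        simp only [ladder, SimpleGraph.fromRel_adj]
        exact ⟨by simp [Prod.ext_iff], Or.inr (by simp)⟩)
    · exact Or.inl (by
        simp only [ladder, SimpleGraph.fromRel_adj]
        exact ⟨by simp [Prod.ext_iff], Or.inl (by simp)⟩)
    · exact Or.inr (by
        rw [SimpleGraph.fromEdgeSet_adj]
        exact ⟨hB, by simp [Prod.ext_iff]⟩)
    · exact Or.inr (by
        rw [SimpleGraph.fromEdgeSet_adj]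
        exact ⟨by rw [Sym2.eq_swap]; exact hA, by simp [Prod.ext_iff]⟩)
    · rw [hG]
      simp only [SimpleGraph.sup_adj, SimpleGraph.fromEdgeSet_adj, not_or, not_and]
      refine ⟨?_, fun h => absurd h (nF_tt _ _)⟩
      simp only [ladder, SimpleGraph.fromRel_adj, not_and, not_or]
      intro _
      simp [Prod.ext_iff, ne1', ne1'.symm, ne3, ne3.symm, ne2, ne2.symm, ne1, ne1.symm]
    · rw [hG]
      simp only [SimpleGraph.sup_adj, SimpleGraph.fromEdgeSet_adj, not_or, not_and]
      refine ⟨?_, fun h => absurd h (nF_ub _ _)⟩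
      simp only [ladder, SimpleGraph.fromRel_adj, not_and, not_or]
      intro _
      simp [Prod.ext_iff]
  constructor
  · rw [Set.eq_univ_iff_forall]
    intro i
    by_contra h
    simp only [Set.mem_union, Set.mem_setOf_eq, not_or] at h
    exact hfree.elim (emb1 i h.1 h.2)
  · intro i hA hB
    exact hfree.elim (emb2 i hA hB)
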